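/- Extension from the Hartogs figure (Lemma 3.2): Let n ≥ 2, let a ∈ ℕ with 1 ≤ a ≤ n−1, and let 0 < ε < 1. Define the (n−a)-concave Hartogs figure H_ε^{n−a} := { z ∈ ℂⁿ : max_{1≤i≤a}|z_i| < 1 and max_{a+1≤j≤n}|z_j| < ε } ∪ { z ∈ ℂⁿ : 1−ε < max_{1≤i≤a}|z_i| < 1 and max_{a+1≤j≤n}|z_j| < 1 }. Then every function f holomorphic on H_ε^{n−a} admits a holomorphic extension F on the open unit polydisc Δⁿ = { z ∈ ℂⁿ : max_{1≤i≤n}|z_i| < 1 } with F = f on H_ε^{n−a}. -/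

import Mathlib

open Metric Set Topology

noncomputable section

/-- `ℂⁿ` with the Euclidean norm. -/
abbrev Cn (n : ℕ) : Type := EuclideanSpace ℂ (Fin n)

/-- The `(n-a)`-concave Hartogs figure
`H_ε^{n-a} = {max_{1≤i≤a}|z_i| < 1, max_{a+1≤j≤n}|z_j| < ε}
  ∪ {1-ε < max_{1≤i≤a}|z_i| < 1, max_{a+1≤j≤n}|z_j| < 1}`
(indices `0, …, a-1` play the role of `1, …, a`,
and indices `a, …, n-1` the role of `a+1, …, n`). -/
def HartogsFigure (n a : ℕ) (ε : ℝ) : Set (Cn n) :=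
  {z : Cn n | (∀ i : Fin n, (i : ℕ) < a → ‖z i‖ < 1) ∧
      (∀ j : Fin n, a ≤ (j : ℕ) → ‖z j‖ < ε)} ∪
  {z : Cn n | (∃ i : Fin n, (i : ℕ) < a ∧ 1 - ε < ‖z i‖) ∧
      (∀ i : Fin n, (i : ℕ) < a → ‖z i‖ < 1) ∧
      (∀ j : Fin n, a ≤ (j : ℕ) → ‖z j‖ < 1)}

/-- The open unit polydisc `Δⁿ = {z : max_{1≤i≤n}|z_i| < 1}`. -/
def UnitPolydisc (n : ℕ) : Set (Cn n) :=
  {z : Cn n | ∀ i : Fin n, ‖z i‖ < 1}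

open Complex

namespace HFE

variable {n : ℕ}

lemma abs_coord_le (z : Cn n) (i : Fin n) : ‖z i‖ ≤ ‖z‖ := by
  rw [EuclideanSpace.norm_eq]
  have h1 : ‖z i‖ = Real.sqrt (‖z i‖ ^ 2) := by
    rw [Real.sqrt_sq (norm_nonneg _)]
  rw [h1]
  apply Real.sqrt_le_sqrt
  exact Finset.single_le_sum (f := fun j => ‖z j‖ ^ 2) (fun j _ => sq_nonneg _)
    (Finset.mem_univ i)

/-- coordinate evaluation is continuous -/
lemma cont_coord (i : Fin n) : Continuous fun z : Cn n => z i :=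
  (EuclideanSpace.proj (𝕜 := ℂ) i).continuous

lemma isOpen_abs_lt (i : Fin n) (c : ℝ) : IsOpen {z : Cn n | ‖z i‖ < c} := by
  have : Continuous fun z : Cn n => ‖z i‖ := (continuous_norm).comp (cont_coord i)
  exact isOpen_lt this continuous_const

lemma isOpen_lt_abs (i : Fin n) (c : ℝ) : IsOpen {z : Cn n | c < ‖z i‖} := by
  have : Continuous fun z : Cn n => ‖z i‖ := (continuous_norm).comp (cont_coord i)
  exact isOpen_lt continuous_const this

lemma isOpen_forall_lt (a : ℕ) (c : ℝ) (p : Fin n → Prop) [DecidablePred p] :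
    IsOpen {z : Cn n | ∀ i : Fin n, p i → ‖z i‖ < c} := by
  have : {z : Cn n | ∀ i : Fin n, p i → ‖z i‖ < c}
      = ⋂ i : Fin n, {z : Cn n | p i → ‖z i‖ < c} := by
    ext z; simp
  rw [this]
  apply isOpen_iInter_of_finite
  intro i
  by_cases h : p i
  · simp only [h, true_implies]; exact isOpen_abs_lt i c
  · simp only [h, false_implies]; simp [isOpen_univ]

lemma isOpen_hartogs (a : ℕ) (ε : ℝ) : IsOpen (HartogsFigure n a ε) := by
  apply IsOpen.union
  · have := (isOpen_forall_lt a 1 (fun i : Fin n => (i : ℕ) < a)).inter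
      (isOpen_forall_lt a ε (fun i : Fin n => a ≤ (i : ℕ)))
    convert this using 1
    ext z; simp only [Set.mem_inter_iff, Set.mem_setOf_eq]
  · have h1 : IsOpen {z : Cn n | ∃ i : Fin n, (i : ℕ) < a ∧ 1 - ε < ‖z i‖} := by
      have : {z : Cn n | ∃ i : Fin n, (i : ℕ) < a ∧ 1 - ε < ‖z i‖}
          = ⋃ i : Fin n, {z : Cn n | (i : ℕ) < a ∧ 1 - ε < ‖z i‖} := by ext z; simp
      rw [this]
      apply isOpen_iUnion
      intro i
      by_cases h : (i : ℕ) < a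
      · simp only [h, true_and]; exact isOpen_lt_abs i (1 - ε)
      · simp only [h, false_and]; simp
    have := h1.inter ((isOpen_forall_lt a 1 (fun i : Fin n => (i : ℕ) < a)).inter
      (isOpen_forall_lt a 1 (fun i : Fin n => a ≤ (i : ℕ))))
    convert this using 1
    ext z; simp only [Set.mem_inter_iff, Set.mem_setOf_eq]

lemma isOpen_polydisc : IsOpen (UnitPolydisc n) := by
  have : UnitPolydisc n = ⋂ i : Fin n, {z : Cn n | ‖z i‖ < 1} := by ext z; simp [UnitPolydisc]
  rw [this]; exact isOpen_iInter_of_finite fun i => isOpen_abs_lt i 1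

lemma hartogs_subset_polydisc {a : ℕ} {ε : ℝ} (hε1 : ε < 1) (ha : 1 ≤ a) :
    HartogsFigure n a ε ⊆ UnitPolydisc n := by
  rintro z (⟨h1, h2⟩ | ⟨_, h1, h2⟩) <;> intro i
  · rcases lt_or_ge (i : ℕ) a with h | h
    · exact h1 i h
    · exact (h2 i h).trans hε1
  · rcases lt_or_ge (i : ℕ) a with h | h
    · exact h1 i h
    · exact h2 i h


section
variable [NeZero n]

def e0 : Cn n := EuclideanSpace.single 0 1
def upd (z : Cn n) (w : ℂ) : Cn n := z + (w - z 0) • e0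
def proj0 : Cn n →L[ℂ] ℂ := EuclideanSpace.proj 0
def Dupd : Cn n →L[ℂ] Cn n :=
  ContinuousLinearMap.id ℂ (Cn n) + ((0 - proj0).smulRight e0)

lemma hasFDerivAt_coord0 (z : Cn n) : HasFDerivAt (fun z : Cn n => z 0) (proj0 (n := n)) z :=
  (EuclideanSpace.proj (0 : Fin n) : Cn n →L[ℂ] ℂ).hasFDerivAt

lemma norm_proj0_le : ‖(proj0 (n := n))‖ ≤ 1 := by
  apply ContinuousLinearMap.opNorm_le_bound _ zero_le_one
  intro z
  rw [one_mul]
  simpa [proj0] using abs_coord_le z 0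

lemma norm_e0 : ‖(e0 (n := n))‖ = 1 := by simp [e0, EuclideanSpace.norm_single]

lemma norm_Dupd_le : ‖(Dupd (n := n))‖ ≤ 2 := by
  refine (norm_add_le _ _).trans ?_
  have h1 : ‖ContinuousLinearMap.id ℂ (Cn n)‖ ≤ 1 := ContinuousLinearMap.norm_id_le
  have h2 : ‖((0 - proj0 (n := n)).smulRight (e0 (n := n)) : Cn n →L[ℂ] Cn n)‖ ≤ 1 := by
    rw [ContinuousLinearMap.norm_smulRight_apply, norm_e0, mul_one, zero_sub, norm_neg]
    exact norm_proj0_le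
  linarith

lemma hasFDerivAt_upd (w : ℂ) (z : Cn n) :
    HasFDerivAt (fun z : Cn n => upd z w) (Dupd (n := n)) z := by
  have h1 : HasFDerivAt (fun z : Cn n => w - z 0) (0 - proj0 (n := n)) z :=
    (hasFDerivAt_const w z).sub (hasFDerivAt_coord0 z)
  exact (hasFDerivAt_id z).add (h1.smul_const e0)

def Gi (r : ℝ) (f : Cn n → ℂ) (z : Cn n) (θ : ℝ) : ℂ :=
  circleMap 0 r θ * I * ((circleMap 0 r θ - z 0)⁻¹ * f (upd z (circleMap 0 r θ)))

def Ei (r : ℝ) (f : Cn n → ℂ) (z : Cn n) (θ : ℝ) : Cn n →L[ℂ] ℂ :=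
  (circleMap 0 r θ * I) •
    ((circleMap 0 r θ - z 0)⁻¹ • ((fderiv ℂ f (upd z (circleMap 0 r θ))).comp Dupd)
      + f (upd z (circleMap 0 r θ)) •
        ((-((circleMap 0 r θ - z 0) ^ 2)⁻¹) • (0 - proj0)))

lemma hasFDerivAt_Gi (r : ℝ) (f : Cn n → ℂ) (θ : ℝ) (z : Cn n)
    (hd : DifferentiableAt ℂ f (upd z (circleMap 0 r θ)))
    (hne : circleMap 0 r θ - z 0 ≠ 0) :
    HasFDerivAt (fun z => Gi r f z θ) (Ei r f z θ) z := by
  set w := circleMap 0 r θ with hw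
  have h1 : HasFDerivAt (fun z : Cn n => w - z 0) (0 - proj0 (n := n)) z :=
    (hasFDerivAt_const w z).sub (hasFDerivAt_coord0 z)
  have hψ : HasFDerivAt (fun z : Cn n => f (upd z w))
      ((fderiv ℂ f (upd z w)).comp Dupd) z :=
    hd.hasFDerivAt.comp z (hasFDerivAt_upd w z)
  have hφ : HasFDerivAt (fun z : Cn n => (w - z 0)⁻¹)
      ((-((w - z 0) ^ 2)⁻¹) • (0 - proj0 (n := n))) z :=
    (hasDerivAt_inv hne).comp_hasFDerivAt z h1
  exact (hφ.mul hψ).const_mul (w * I)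

lemma norm_Ei_le (r : ℝ) (f : Cn n → ℂ) (z : Cn n) (θ : ℝ) (hr : 0 ≤ r)
    {ρ M₁ M₂ : ℝ} (hρ : 0 < ρ)
    (hM₁ : ‖f (upd z (circleMap 0 r θ))‖ ≤ M₁)
    (hM₂ : ‖fderiv ℂ f (upd z (circleMap 0 r θ))‖ ≤ M₂)
    (hlow : ρ ≤ ‖circleMap 0 r θ - z 0‖) :
    ‖Ei r f z θ‖ ≤ r * (ρ⁻¹ * (M₂ * 2) + M₁ * (ρ ^ 2)⁻¹) := by
  have hM₂0 : 0 ≤ M₂ := le_trans (norm_nonneg _) hM₂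
  have hM₁0 : 0 ≤ M₁ := le_trans (norm_nonneg _) hM₁
  set w := circleMap 0 r θ with hw
  set u := upd z w with hu
  set A : Cn n →L[ℂ] ℂ := (fderiv ℂ f u).comp Dupd with hA
  set B : Cn n →L[ℂ] ℂ := (-((w - z 0) ^ 2)⁻¹) • (0 - proj0) with hB
  have e0' : Ei r f z θ = (w * I) • ((w - z 0)⁻¹ • A + f u • B) := rfl
  have h1 : ‖w * I‖ = r := by
    simp [hw, norm_mul, norm_circleMap_zero, _root_.abs_of_nonneg hr]
  have hinv : ‖(w - z 0)⁻¹‖ ≤ ρ⁻¹ := by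
    rw [norm_inv]
    exact inv_anti₀ hρ hlow
  have hAle : ‖A‖ ≤ M₂ * 2 := by
    refine (ContinuousLinearMap.opNorm_comp_le _ _).trans ?_
    have hd2 : ‖(Dupd (n := n))‖ ≤ 2 := norm_Dupd_le
    gcongr
  have hBle : ‖B‖ ≤ (ρ ^ 2)⁻¹ := by
    refine le_trans (ContinuousLinearMap.opNorm_smul_le _ _) ?_
    have h3 : ‖(-((w - z 0) ^ 2)⁻¹ : ℂ)‖ ≤ (ρ ^ 2)⁻¹ := by
      rw [norm_neg, norm_inv, norm_pow]
      refine inv_anti₀ (by positivity) ?_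
      exact pow_le_pow_left₀ hρ.le hlow 2
    have h4 : ‖(0 - proj0 (n := n))‖ ≤ 1 := by
      rw [zero_sub, norm_neg]; exact norm_proj0_le
    calc ‖(-((w - z 0) ^ 2)⁻¹ : ℂ)‖ * ‖(0 - proj0 (n := n))‖
        ≤ (ρ ^ 2)⁻¹ * 1 := mul_le_mul h3 h4 (norm_nonneg _) (by positivity)
      _ = (ρ ^ 2)⁻¹ := mul_one _
  rw [e0']
  refine le_trans (ContinuousLinearMap.opNorm_smul_le _ _) ?_
  rw [h1]
  have hX : ‖(w - z 0)⁻¹ • A + f u • B‖ ≤ ρ⁻¹ * (M₂ * 2) + M₁ * (ρ ^ 2)⁻¹ := by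
    refine (norm_add_le _ _).trans ?_
    have t1 : ‖(w - z 0)⁻¹ • A‖ ≤ ρ⁻¹ * (M₂ * 2) :=
      le_trans (ContinuousLinearMap.opNorm_smul_le _ _)
        (mul_le_mul hinv hAle (norm_nonneg _) (by positivity))
    have t2 : ‖f u • B‖ ≤ M₁ * (ρ ^ 2)⁻¹ :=
      le_trans (ContinuousLinearMap.opNorm_smul_le _ _)
        (mul_le_mul hM₁ hBle (norm_nonneg _) hM₁0)
    linarith
  exact mul_le_mul_of_nonneg_left hX hr

lemma upd_apply (z : Cn n) (w : ℂ) (i : Fin n) :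
    upd z w i = if i = 0 then w else z i := by
  simp only [upd, PiLp.add_apply, PiLp.smul_apply, e0, EuclideanSpace.single_apply,
    smul_eq_mul]
  split
  next h => subst h; ring
  next h => ring

lemma upd_apply_zero (z : Cn n) (w : ℂ) : upd z w 0 = w := by simp [upd_apply]

lemma upd_apply_ne (z : Cn n) (w : ℂ) {i : Fin n} (h : i ≠ 0) : upd z w i = z i := by
  simp [upd_apply, h]

lemma upd_self (z : Cn n) : upd z (z 0) = z := by simp [upd]

variable {a : ℕ} {ε : ℝ}

lemma upd_mem_comp1 (ha : 1 ≤ a) {z : Cn n}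
    (hz1 : ∀ i : Fin n, (i : ℕ) < a → ‖z i‖ < 1)
    (hz2 : ∀ j : Fin n, a ≤ (j : ℕ) → ‖z j‖ < ε)
    {w : ℂ} (hw : ‖w‖ < 1) : upd z w ∈ HartogsFigure n a ε := by
  left
  constructor
  · intro i hi
    by_cases h : i = 0
    · rw [h, upd_apply_zero]; exact hw
    · rw [upd_apply_ne _ _ h]; exact hz1 i hi
  · intro j hj
    have hj0 : j ≠ 0 := by
      intro h; rw [h] at hj; simp at hj; omega
    rw [upd_apply_ne _ _ hj0]; exact hz2 j hj

lemma upd_mem_comp2 (ha : 1 ≤ a) {r : ℝ} (hr1 : 1 - ε < r) (hr2 : r < 1) {z : Cn n}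
    (hz : ∀ i : Fin n, ‖z i‖ < 1)
    {w : ℂ} (hw : ‖w‖ = r) : upd z w ∈ HartogsFigure n a ε := by
  right
  have h0a : ((0 : Fin n) : ℕ) < a := by simp; omega
  refine ⟨⟨0, h0a, ?_⟩, ?_, ?_⟩
  · rw [upd_apply_zero, hw]; exact hr1
  · intro i _
    by_cases h : i = 0
    · rw [h, upd_apply_zero, hw]; exact hr2
    · rw [upd_apply_ne _ _ h]; exact hz i
  · intro j hj
    have hj0 : j ≠ 0 := by intro h; rw [h] at hj; simp at hj; omega
    rw [upd_apply_ne _ _ hj0]; exact hz j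

lemma continuous_upd : Continuous fun p : Cn n × ℂ => upd p.1 p.2 := by
  unfold upd
  exact continuous_fst.add
    (((continuous_snd.sub ((EuclideanSpace.proj (0 : Fin n)).continuous.comp
      continuous_fst)).smul continuous_const))

lemma differentiable_upd_right (z : Cn n) : Differentiable ℂ fun w : ℂ => upd z w := by
  unfold upd
  exact (((differentiable_id.sub_const (z 0)).smul_const (e0 : Cn n)).const_add z)

/-- The Cauchy integral formula step: on the "thin" part of the Hartogs figure,
the Cauchy integral reproduces `f`. -/
lemma cauchy_eq (ha : 1 ≤ a) {r : ℝ} (hr0 : 0 < r) (hr1 : r < 1)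
    {f : Cn n → ℂ} (hf : DifferentiableOn ℂ f (HartogsFigure n a ε))
    {z : Cn n} (hz0 : ‖z 0‖ < r)
    (hz1 : ∀ i : Fin n, (i : ℕ) < a → ‖z i‖ < 1)
    (hz2 : ∀ j : Fin n, a ≤ (j : ℕ) → ‖z j‖ < ε) :
    ((2 * Real.pi * I : ℂ)⁻¹ • ∮ w in C(0, r), (w - z 0)⁻¹ • f (upd z w)) = f z := by
  have hmaps : MapsTo (fun w : ℂ => upd z w) (ball (0:ℂ) 1) (HartogsFigure n a ε) := by
    intro w hw
    exact upd_mem_comp1 ha hz1 hz2 (by simpa using mem_ball_zero_iff.mp hw)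
  have hdiff : DifferentiableOn ℂ (fun w : ℂ => f (upd z w)) (ball (0:ℂ) 1) :=
    hf.comp ((differentiable_upd_right z).differentiableOn) hmaps
  have hsub : closedBall (0:ℂ) r ⊆ ball (0:ℂ) 1 := closedBall_subset_ball hr1
  have hdc : DiffContOnCl ℂ (fun w : ℂ => f (upd z w)) (ball (0:ℂ) r) := by
    constructor
    · exact hdiff.mono (ball_subset_ball hr1.le)
    · rw [closure_ball (0:ℂ) hr0.ne']
      exact hdiff.continuousOn.mono hsub
  have hz0' : z 0 ∈ ball (0:ℂ) r :=
    mem_ball_zero_iff.mpr (by simpa using hz0)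
  have := hdc.two_pi_i_inv_smul_circleIntegral_sub_inv_smul hz0'
  rw [this, upd_self]


end

lemma fderiv_bound {s : Set (Cn n)} (hs : IsOpen s) {f : Cn n → ℂ}
    (hf : DifferentiableOn ℂ f s) {K : Set (Cn n)} (hK : IsCompact K) (hKs : K ⊆ s) :
    ∃ M : ℝ, 0 ≤ M ∧ ∀ u ∈ K, ‖fderiv ℂ f u‖ ≤ M := by
  obtain ⟨ρ, hρ0, hρ⟩ := hK.exists_cthickening_subset_open hs hKs
  have hK' : IsCompact (cthickening ρ K) := hK.cthickening
  obtain ⟨M₀, hM₀⟩ := hK'.exists_bound_of_continuousOn (hf.continuousOn.mono hρ)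
  set C := max M₀ 0 with hC
  refine ⟨C / ρ, div_nonneg (le_max_right _ _) hρ0.le, fun u hu => ?_⟩
  apply ContinuousLinearMap.opNorm_le_bound _ (div_nonneg (le_max_right _ _) hρ0.le)
  intro v
  by_cases hv : v = 0
  · simp [hv]
  have hv0 : (0:ℝ) < ‖v‖ := norm_pos_iff.mpr hv
  set R := ρ / ‖v‖ with hR
  have hR0 : 0 < R := div_pos hρ0 hv0
  set g : ℂ → ℂ := fun t => f (u + t • v) with hg
  have hmem : ∀ t : ℂ, ‖t‖ ≤ R → u + t • v ∈ cthickening ρ K := by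
    intro t ht
    apply closedBall_subset_cthickening hu ρ
    rw [mem_closedBall]
    have : dist (u + t • v) u = ‖t • v‖ := by
      rw [dist_eq_norm]; congr 1; abel
    rw [this, norm_smul]
    calc ‖t‖ * ‖v‖ ≤ R * ‖v‖ := by gcongr
      _ = ρ := by rw [hR, div_mul_cancel₀ _ hv0.ne']
  have hdiffg : DifferentiableOn ℂ g (closedBall (0:ℂ) R) := by
    apply hf.comp (by fun_prop : Differentiable ℂ fun t : ℂ => u + t • v).differentiableOn
    intro t ht
    exact hρ (hmem t (by simpa using mem_closedBall_zero_iff.mp ht))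
  have hdc : DiffContOnCl ℂ g (ball (0:ℂ) R) := by
    constructor
    · exact hdiffg.mono ball_subset_closedBall
    · rw [closure_ball (0:ℂ) hR0.ne']
      exact hdiffg.continuousOn
  have hfd : HasFDerivAt f (fderiv ℂ f u) u :=
    (hf.differentiableAt (hs.mem_nhds (hKs hu))).hasFDerivAt
  have h2 : HasDerivAt (fun t : ℂ => u + t • v) v 0 := by
    simpa using ((hasDerivAt_id (0:ℂ)).smul_const v).const_add u
  have hder : HasDerivAt g (fderiv ℂ f u v) 0 := by
    have hfd' : HasFDerivAt f (fderiv ℂ f u) ((fun t : ℂ => u + t • v) 0) := by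
      simpa using hfd
    exact hfd'.comp_hasDerivAt (0:ℂ) h2
  have hest : ‖deriv g 0‖ ≤ C / R := by
    apply norm_deriv_le_of_forall_mem_sphere_norm_le hR0 hdc
    intro z hz
    have hzR : ‖z‖ = R := by
      have := mem_sphere_zero_iff_norm.mp hz; simpa using this
    exact le_trans (hM₀ _ (hmem z hzR.le)) (le_max_left _ _)
  have : ‖fderiv ℂ f u v‖ ≤ C / R := hder.deriv ▸ hest
  calc ‖fderiv ℂ f u v‖ ≤ C / R := this
    _ = C / ρ * ‖v‖ := by rw [hR]; field_simp


section
variable [NeZero n]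

def CF (r : ℝ) (f : Cn n → ℂ) (z : Cn n) : ℂ :=
  (2 * Real.pi * I : ℂ)⁻¹ • ∫ θ in (0:ℝ)..(2 * Real.pi), Gi r f z θ

lemma CF_eq (r : ℝ) (f : Cn n → ℂ) (z : Cn n) :
    CF r f z = (2 * Real.pi * I : ℂ)⁻¹ • ∮ w in C(0, r), (w - z 0)⁻¹ • f (upd z w) := by
  rw [CF, circleIntegral]
  congr 1
  apply intervalIntegral.integral_congr
  intro θ _
  simp only [Gi, deriv_circleMap, smul_eq_mul]

lemma differentiableAt_CF {a : ℕ} {ε : ℝ} (ha : 1 ≤ a) {r : ℝ}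
    (hr0 : 0 < r) (hr1 : 1 - ε < r) (hr2 : r < 1)
    {f : Cn n → ℂ} (hf : DifferentiableOn ℂ f (HartogsFigure n a ε)) {x₀ : Cn n}
    (hx0 : ‖x₀ 0‖ < r) (hx : ∀ i, ‖x₀ i‖ < 1) :
    DifferentiableAt ℂ (CF r f) x₀ := by
  have hHo : IsOpen (HartogsFigure n a ε) := isOpen_hartogs a ε
  -- the open set V
  have hVo : IsOpen ({z : Cn n | ‖z 0‖ < r} ∩ UnitPolydisc n) :=
    (isOpen_abs_lt 0 r).inter isOpen_polydisc
  obtain ⟨δ₁, hδ₁, hδball⟩ := Metric.isOpen_iff.mp hVo x₀ ⟨hx0, hx⟩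
  set ρ : ℝ := (r - ‖x₀ 0‖) / 2 with hρdef
  have hρ0 : 0 < ρ := by simp only [hρdef]; linarith
  set δ : ℝ := min (δ₁ / 2) ρ with hδdef
  have hδ0 : 0 < δ := lt_min (by linarith) hρ0
  have hδρ : δ ≤ ρ := min_le_right _ _
  have hδcb : closedBall x₀ δ ⊆ {z : Cn n | ‖z 0‖ < r} ∩ UnitPolydisc n :=
    (closedBall_subset_ball (by simp only [hδdef]; exact lt_of_le_of_lt (min_le_left _ _) (by linarith))).trans hδball
  -- coordinate bounds on the closed ball
  have hz0d : ∀ z ∈ closedBall x₀ δ, ‖z 0‖ ≤ ‖x₀ 0‖ + δ := by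
    intro z hz
    have h1 : ‖z 0 - x₀ 0‖ ≤ δ := by
      have := abs_coord_le (z - x₀) 0
      simp only [PiLp.sub_apply] at this
      exact this.trans (by simpa [dist_eq_norm] using mem_closedBall.mp hz)
    have h2 : ‖z 0‖ - ‖x₀ 0‖ ≤ ‖z 0 - x₀ 0‖ := by
      have := norm_sub_norm_le (z 0) (x₀ 0)
      simpa using this
    linarith
  have hlow : ∀ z ∈ closedBall x₀ δ, ∀ θ : ℝ, ρ ≤ ‖circleMap 0 r θ - z 0‖ := by
    intro z hz θ
    have h1 : ‖circleMap 0 r θ‖ = r := by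
      rw [norm_circleMap_zero, _root_.abs_of_nonneg hr0.le]
    have h2 : ‖circleMap 0 r θ‖ - ‖z 0‖
        ≤ ‖circleMap 0 r θ - z 0‖ := by
      have := norm_sub_norm_le (circleMap 0 r θ) (z 0)
      simpa using this
    have h3 := hz0d z hz
    have : ρ + ρ = r - ‖x₀ 0‖ := by rw [hρdef]; ring
    linarith
  have hne : ∀ z ∈ closedBall x₀ δ, ∀ θ : ℝ, circleMap 0 r θ - z 0 ≠ 0 := by
    intro z hz θ h
    have := hlow z hz θ
    rw [h] at this; simp at this; linarith
  -- the compact set K and bounds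
  set K : Set (Cn n) := (fun p : Cn n × ℂ => upd p.1 p.2) '' (closedBall x₀ δ ×ˢ sphere (0:ℂ) r)
    with hKdef
  have hKc : IsCompact K :=
    ((isCompact_closedBall _ _).prod (isCompact_sphere _ _)).image continuous_upd
  have hKH : K ⊆ HartogsFigure n a ε := by
    rintro _ ⟨⟨z, w⟩, ⟨hz, hw⟩, rfl⟩
    exact upd_mem_comp2 ha hr1 hr2 (fun i => (hδcb hz).2 i)
      (by simpa using mem_sphere_zero_iff_norm.mp hw)
  have hmemK : ∀ z ∈ closedBall x₀ δ, ∀ θ : ℝ, upd z (circleMap 0 r θ) ∈ K := by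
    intro z hz θ
    exact ⟨(z, circleMap 0 r θ), ⟨hz, circleMap_mem_sphere 0 hr0.le θ⟩, rfl⟩
  obtain ⟨M₁, hM₁⟩ := hKc.exists_bound_of_continuousOn (hf.continuousOn.mono hKH)
  obtain ⟨M₂, hM₂0, hM₂⟩ := fderiv_bound hHo hf hKc hKH
  set C : ℝ := r * (ρ⁻¹ * (M₂ * 2) + (max M₁ 0) * (ρ ^ 2)⁻¹) with hCdef
  -- continuity of the integrand in θ
  have hGcont : ∀ z ∈ closedBall x₀ δ, Continuous fun θ => Gi r f z θ := by
    intro z hz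
    have hc1 : Continuous fun θ : ℝ => circleMap 0 r θ := continuous_circleMap 0 r
    have hcu : Continuous fun θ : ℝ => upd z (circleMap 0 r θ) :=
      continuous_upd.comp (continuous_const.prodMk hc1)
    have hcf : Continuous fun θ : ℝ => f (upd z (circleMap 0 r θ)) :=
      hf.continuousOn.comp_continuous hcu fun θ => hKH (hmemK z hz θ)
    have hinv : Continuous fun θ : ℝ => (circleMap 0 r θ - z 0)⁻¹ :=
      (hc1.sub continuous_const).inv₀ fun θ => hne z hz θ
    exact (hc1.mul continuous_const).mul (hinv.mul hcf)
  -- apply the parametric integral theorem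
  have key := intervalIntegral.hasFDerivAt_integral_of_dominated_of_fderiv_le
    (𝕜 := ℂ) (μ := MeasureTheory.volume) (F := fun z θ => Gi r f z θ)
    (F' := fun z θ => Ei r f z θ) (x₀ := x₀) (a := 0) (b := 2 * Real.pi)
    (bound := fun _ => C) (s := ball x₀ δ) (ball_mem_nhds x₀ hδ0)
    ?hmeas ?hint ?hmeas' ?hbound ?hbint ?hdiff
  · exact (key.differentiableAt).const_smul ((2 * Real.pi * I : ℂ)⁻¹)
  case hmeas =>
    filter_upwards [closedBall_mem_nhds x₀ hδ0] with z hz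
    exact (hGcont z hz).aestronglyMeasurable
  case hint =>
    exact (hGcont x₀ (mem_closedBall_self hδ0.le)).intervalIntegrable _ _
  case hmeas' =>
    have hx₀cb : x₀ ∈ closedBall x₀ δ := mem_closedBall_self hδ0.le
    have hc1 : Continuous fun θ : ℝ => circleMap 0 r θ := continuous_circleMap 0 r
    have hcu : Continuous fun θ : ℝ => upd x₀ (circleMap 0 r θ) :=
      continuous_upd.comp (continuous_const.prodMk hc1)
    borelize (Cn n)
    have hm : Measurable fun θ : ℝ => fderiv ℂ f (upd x₀ (circleMap 0 r θ)) :=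
      (measurable_fderiv ℂ f).comp hcu.measurable
    have hcf : Continuous fun θ : ℝ => f (upd x₀ (circleMap 0 r θ)) :=
      hf.continuousOn.comp_continuous hcu fun θ => hKH (hmemK x₀ hx₀cb θ)
    have hΨ : Continuous fun p : ℝ × (Cn n →L[ℂ] ℂ) =>
        (circleMap 0 r p.1 * I) •
          ((circleMap 0 r p.1 - x₀ 0)⁻¹ • (p.2.comp Dupd)
            + f (upd x₀ (circleMap 0 r p.1)) •
              ((-((circleMap 0 r p.1 - x₀ 0) ^ 2)⁻¹) • (0 - proj0))) := by
      have c1 : Continuous fun p : ℝ × (Cn n →L[ℂ] ℂ) => circleMap 0 r p.1 :=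
        hc1.comp continuous_fst
      have c2 : Continuous fun p : ℝ × (Cn n →L[ℂ] ℂ) => p.2.comp (Dupd (n := n)) :=
        continuous_snd.clm_comp_const _
      have c3 : Continuous fun p : ℝ × (Cn n →L[ℂ] ℂ) => (circleMap 0 r p.1 - x₀ 0)⁻¹ :=
        (c1.sub continuous_const).inv₀ fun p => hne x₀ hx₀cb p.1
      have c4 : Continuous fun p : ℝ × (Cn n →L[ℂ] ℂ) => f (upd x₀ (circleMap 0 r p.1)) :=
        hcf.comp continuous_fst
      have c5 : Continuous fun p : ℝ × (Cn n →L[ℂ] ℂ) =>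
          (-((circleMap 0 r p.1 - x₀ 0) ^ 2)⁻¹ : ℂ) :=
        (((c1.sub continuous_const).pow 2).inv₀ fun p =>
          pow_ne_zero 2 (hne x₀ hx₀cb p.1)).neg
      exact ((c1.mul continuous_const).smul
        ((c3.smul c2).add (c4.smul (c5.smul continuous_const))))
    have : (fun θ => Ei r f x₀ θ) = fun θ =>
        (fun p : ℝ × (Cn n →L[ℂ] ℂ) =>
          (circleMap 0 r p.1 * I) •
            ((circleMap 0 r p.1 - x₀ 0)⁻¹ • (p.2.comp Dupd)
              + f (upd x₀ (circleMap 0 r p.1)) •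
                ((-((circleMap 0 r p.1 - x₀ 0) ^ 2)⁻¹) • (0 - proj0))))
          (θ, fderiv ℂ f (upd x₀ (circleMap 0 r θ))) := by
      funext θ; rfl
    have hms : MeasureTheory.AEStronglyMeasurable (fun θ => Ei r f x₀ θ)
        (MeasureTheory.volume.restrict (Set.uIoc 0 (2 * Real.pi))) := by
      rw [this]
      exact (hΨ.measurable.comp (measurable_id.prodMk hm)).aestronglyMeasurable
    exact hms
  case hbound =>
    apply MeasureTheory.ae_of_all
    intro θ _ z hz
    have hzcb : z ∈ closedBall x₀ δ := ball_subset_closedBall hz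
    refine norm_Ei_le r f z θ hr0.le hρ0 ?_ ?_ (hlow z hzcb θ)
    · exact le_trans (hM₁ _ (hmemK z hzcb θ)) (le_max_left _ _)
    · exact hM₂ _ (hmemK z hzcb θ)
  case hbint => exact intervalIntegrable_const
  case hdiff =>
    apply MeasureTheory.ae_of_all
    intro θ _ z hz
    have hzcb : z ∈ closedBall x₀ δ := ball_subset_closedBall hz
    exact hasFDerivAt_Gi r f θ z
      (hf.differentiableAt (hHo.mem_nhds (hKH (hmemK z hzcb θ)))) (hne z hzcb θ)

end

section
variable [NeZero n]

lemma CF_eq_f_W {a : ℕ} {ε : ℝ} (ha : 1 ≤ a) {r : ℝ} (hr0 : 0 < r) (hr2 : r < 1)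
    {f : Cn n → ℂ} (hf : DifferentiableOn ℂ f (HartogsFigure n a ε))
    {z : Cn n} (hz0 : ‖z 0‖ < r)
    (hz1 : ∀ i : Fin n, (i : ℕ) < a → ‖z i‖ < 1)
    (hz2 : ∀ j : Fin n, a ≤ (j : ℕ) → ‖z j‖ < ε) :
    CF r f z = f z := by
  rw [CF_eq]
  exact cauchy_eq ha hr0 hr2 hf hz0 hz1 hz2

lemma CF_eq_f_comp2 {a : ℕ} {ε : ℝ} (ha : 1 ≤ a) (hε0 : 0 < ε) {r : ℝ}
    (hr0 : 0 < r) (hr1 : 1 - ε < r) (hr2 : r < 1)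
    {f : Cn n → ℂ} (hf : DifferentiableOn ℂ f (HartogsFigure n a ε))
    {z : Cn n} (hz0 : ‖z 0‖ < r)
    {i₀ : Fin n} (hi₀a : (i₀ : ℕ) < a) (hi₀ : 1 - ε < ‖z i₀‖)
    (hz1 : ∀ i : Fin n, (i : ℕ) < a → ‖z i‖ < 1)
    (hz2 : ∀ j : Fin n, a ≤ (j : ℕ) → ‖z j‖ < 1) :
    CF r f z = f z := by
  have hHo : IsOpen (HartogsFigure n a ε) := isOpen_hartogs a ε
  have hall : ∀ i : Fin n, ‖z i‖ < 1 := by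
    intro i
    rcases lt_or_ge (i : ℕ) a with h | h
    · exact hz1 i h
    · exact hz2 i h
  have h0a : ((0 : Fin n) : ℕ) < a := by simp; omega
  -- the supremum of the coordinates
  set c : ℝ := Finset.univ.sup' (Finset.univ_nonempty) (fun i : Fin n => ‖z i‖)
    with hc
  have hc1 : c < 1 := by
    rw [hc, Finset.sup'_lt_iff]
    exact fun i _ => hall i
  have hc0 : 0 ≤ c := le_trans (norm_nonneg (z 0))
    (Finset.le_sup' (f := fun i : Fin n => ‖z i‖) (Finset.mem_univ 0))
  have hcle : ∀ i, ‖z i‖ ≤ c := fun i =>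
    Finset.le_sup' (f := fun i : Fin n => ‖z i‖) (Finset.mem_univ i)
  set R : ℝ := 2 / (1 + c) with hR
  have h1c : (0:ℝ) < 1 + c := by linarith
  have hR1 : 1 < R := by
    rw [hR, lt_div_iff₀ h1c]; linarith
  have hR0 : 0 < R := lt_trans one_pos hR1
  have hRc : ∀ t : ℂ, ‖t‖ < R → ‖t‖ * c < 1 := by
    intro t ht
    have h1 : ‖t‖ * c ≤ R * c :=
      mul_le_mul_of_nonneg_right ht.le hc0
    have h2 : R * c < 1 := by
      rw [hR, div_mul_eq_mul_div, div_lt_one h1c]; linarith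
    linarith
  -- the scaling family
  set P : Cn n := WithLp.toLp 2 (fun i : Fin n => if (i : ℕ) < a then z i else 0) with hP
  set Q : Cn n := WithLp.toLp 2 (fun i : Fin n => if (i : ℕ) < a then 0 else z i) with hQ
  set σ : ℂ → Cn n := fun t => P + t • Q with hσ
  have hσap : ∀ (t : ℂ) (i : Fin n), σ t i = if (i : ℕ) < a then z i else t * z i := by
    intro t i
    simp only [hσ, PiLp.add_apply, PiLp.smul_apply, hP, hQ, PiLp.toLp_apply, smul_eq_mul]
    split <;> ring
  have hσ1 : σ 1 = z := by
    ext i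
    rw [hσap]
    split <;> simp
  have hσdiff : Differentiable ℂ σ := by
    rw [hσ]
    exact (differentiable_id.smul_const Q).const_add P
  -- membership facts
  have hσlt1 : ∀ t : ℂ, ‖t‖ < R → ∀ i, ‖σ t i‖ < 1 := by
    intro t ht i
    rw [hσap]
    split
    · exact hall i
    · rw [norm_mul]
      calc ‖t‖ * ‖z i‖ ≤ ‖t‖ * c :=
            mul_le_mul_of_nonneg_left (hcle i) (norm_nonneg t)
        _ < 1 := hRc t ht
  have hσ0 : ∀ t : ℂ, ‖σ t 0‖ < r := by
    intro t
    rw [hσap]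
    simp only [h0a, if_pos]
    exact hz0
  have hσH : ∀ t : ℂ, ‖t‖ < R → σ t ∈ HartogsFigure n a ε := by
    intro t ht
    right
    refine ⟨⟨i₀, hi₀a, ?_⟩, fun i hi => hσlt1 t ht i, fun j _ => hσlt1 t ht j⟩
    rw [hσap]
    simp only [hi₀a, if_pos]
    exact hi₀
  -- h is holomorphic on the ball of radius R
  set h : ℂ → ℂ := fun t => CF r f (σ t) - f (σ t) with hh
  have hhd : DifferentiableOn ℂ h (ball (0:ℂ) R) := by
    intro t ht
    have htR : ‖t‖ < R := by simpa using mem_ball_zero_iff.mp ht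
    have h1 : DifferentiableAt ℂ (CF r f) (σ t) :=
      differentiableAt_CF ha hr0 hr1 hr2 hf (hσ0 t) (hσlt1 t htR)
    have h2 : DifferentiableAt ℂ f (σ t) :=
      hf.differentiableAt (hHo.mem_nhds (hσH t htR))
    exact ((h1.comp t (hσdiff t)).sub (h2.comp t (hσdiff t))).differentiableWithinAt
  -- h vanishes near 0
  have hzero : ∀ t : ℂ, ‖t‖ < min ε R → h t = 0 := by
    intro t ht
    have htε : ‖t‖ < ε := lt_of_lt_of_le ht (min_le_left _ _)
    have htR : ‖t‖ < R := lt_of_lt_of_le ht (min_le_right _ _)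
    have : CF r f (σ t) = f (σ t) := by
      apply CF_eq_f_W ha hr0 hr2 hf (hσ0 t)
      · exact fun i hi => hσlt1 t htR i
      · intro j hj
        rw [hσap]
        have hja : ¬ ((j : ℕ) < a) := by omega
        simp only [hja, if_neg, if_false]
        rw [norm_mul]
        calc ‖t‖ * ‖z j‖ ≤ ‖t‖ * 1 :=
              mul_le_mul_of_nonneg_left (hall j).le (norm_nonneg t)
          _ < ε := by rwa [mul_one]
    rw [hh]
    simp [this]
  -- identity theorem in one variable
  have hana : AnalyticOnNhd ℂ h (ball (0:ℂ) R) := hhd.analyticOnNhd isOpen_ball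
  have hanag : AnalyticOnNhd ℂ (fun _ : ℂ => (0:ℂ)) (ball (0:ℂ) R) :=
    analyticOnNhd_const
  have hpre : IsPreconnected (ball (0:ℂ) R) := (convex_ball _ _).isPreconnected
  have h0mem : (0:ℂ) ∈ ball (0:ℂ) R := mem_ball_self hR0
  have hev : h =ᶠ[nhds (0:ℂ)] (fun _ => (0:ℂ)) := by
    have hmo : (0:ℂ) ∈ ball (0:ℂ) (min ε R) := mem_ball_self (lt_min hε0 hR0)
    filter_upwards [isOpen_ball.mem_nhds hmo] with t ht
    exact hzero t (by simpa using mem_ball_zero_iff.mp ht)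
  have heq := hana.eqOn_of_preconnected_of_eventuallyEq hanag hpre h0mem hev
  have h1mem : (1:ℂ) ∈ ball (0:ℂ) R := by
    rw [mem_ball_zero_iff]
    simpa using hR1
  have := heq h1mem
  rw [hh] at this
  simp only [hσ1] at this
  exact sub_eq_zero.mp this
  
end

end HFE

/-- **Extension from the Hartogs figure (Lemma 3.2).** Let `n ≥ 2`, `1 ≤ a ≤ n-1` and
`0 < ε < 1`.  Every function `f` holomorphic on the Hartogs figure `H_ε^{n-a}` admits a
holomorphic extension `F` to the unit polydisc `Δⁿ`, with `F = f` on `H_ε^{n-a}`. -/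
theorem hartogs_figure_extension (n a : ℕ) (hn : 2 ≤ n) (ha1 : 1 ≤ a) (ha2 : a ≤ n - 1)
    (ε : ℝ) (hε0 : 0 < ε) (hε1 : ε < 1)
    (f : Cn n → ℂ) (hf : DifferentiableOn ℂ f (HartogsFigure n a ε)) :
    ∃ F : Cn n → ℂ, DifferentiableOn ℂ F (UnitPolydisc n) ∧
      Set.EqOn F f (HartogsFigure n a ε) := by
  haveI : NeZero n := ⟨by omega⟩
  have hHo : IsOpen (HartogsFigure n a ε) := HFE.isOpen_hartogs a ε
  set r : ℝ := 1 - ε / 2 with hr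
  have hr0 : 0 < r := by rw [hr]; linarith
  have hr1 : 1 - ε < r := by rw [hr]; linarith
  have hr2 : r < 1 := by rw [hr]; linarith
  classical
  refine ⟨fun z => if ‖z 0‖ < r then HFE.CF r f z else f z, ?_, ?_⟩
  · -- differentiability on the polydisc
    intro z hz
    by_cases hcase : ‖z 0‖ < r
    · have h1 : DifferentiableAt ℂ (HFE.CF r f) z :=
        HFE.differentiableAt_CF ha1 hr0 hr1 hr2 hf hcase hz
      have hev : (fun z : Cn n => if ‖z 0‖ < r then HFE.CF r f z else f z)
          =ᶠ[nhds z] HFE.CF r f := by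
        filter_upwards [(HFE.isOpen_abs_lt (0 : Fin n) r).mem_nhds hcase] with y hy
        exact if_pos hy
      exact (h1.congr_of_eventuallyEq hev).differentiableWithinAt
    · have hzU : z ∈ {y : Cn n | 1 - ε < ‖y 0‖} ∩ UnitPolydisc n :=
        ⟨lt_of_lt_of_le hr1 (not_lt.mp hcase), hz⟩
      have hUo : IsOpen ({y : Cn n | 1 - ε < ‖y 0‖} ∩ UnitPolydisc n) :=
        (HFE.isOpen_lt_abs (0 : Fin n) (1 - ε)).inter HFE.isOpen_polydisc
      have h0a : ((0 : Fin n) : ℕ) < a := by simp; omega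
      have hmemH : ∀ y ∈ {y : Cn n | 1 - ε < ‖y 0‖} ∩ UnitPolydisc n,
          y ∈ HartogsFigure n a ε := by
        rintro y ⟨hy1, hy2⟩
        exact Or.inr ⟨⟨0, h0a, hy1⟩, fun i _ => hy2 i, fun j _ => hy2 j⟩
      have hEq : ∀ y ∈ {y : Cn n | 1 - ε < ‖y 0‖} ∩ UnitPolydisc n,
          (if ‖y 0‖ < r then HFE.CF r f y else f y) = f y := by
        rintro y ⟨hy1, hy2⟩
        by_cases habs : ‖y 0‖ < r
        · rw [if_pos habs]
          exact HFE.CF_eq_f_comp2 ha1 hε0 hr0 hr1 hr2 hf habs h0a hy1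
            (fun i _ => hy2 i) (fun j _ => hy2 j)
        · exact if_neg habs
      have h2 : DifferentiableAt ℂ f z := hf.differentiableAt (hHo.mem_nhds (hmemH z hzU))
      have hev : (fun y : Cn n => if ‖y 0‖ < r then HFE.CF r f y else f y)
          =ᶠ[nhds z] f := by
        filter_upwards [hUo.mem_nhds hzU] with y hy
        exact hEq y hy
      exact (h2.congr_of_eventuallyEq hev).differentiableWithinAt
  · -- agreement on the Hartogs figure
    intro z hz
    by_cases habs : ‖z 0‖ < r
    · simp only [if_pos habs]
      rcases hz with ⟨hz1, hz2⟩ | ⟨⟨i₀, hi₀a, hi₀⟩, hz1, hz2⟩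
      · exact HFE.CF_eq_f_W ha1 hr0 hr2 hf habs hz1 hz2
      · exact HFE.CF_eq_f_comp2 ha1 hε0 hr0 hr1 hr2 hf habs hi₀a hi₀ hz1 hz2
    · simp only [if_neg habs]
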